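/- The normalized mean distance on the unit sphere admits the refined asymptotic ξ_μ(d) = √2 (1 − 1/(8d) + o(1/d)): writing ξ_μ(d) = 2^{d−1} (Γ(d/2))² / (√π · Γ(d − 1/2)), one has lim_{d→∞} d · (√2 − ξ_μ(d)) = √2 / 8, where the limit is taken over integers d → ∞. -/

import Mathlib

open Real Filter Set

noncomputable def rr (x : ℝ) : ℝ := Real.Gamma (x + 1/2) / Real.Gamma x

lemma rr_pos {x : ℝ} (hx : 0 < x) : 0 < rr x :=
  div_pos (Real.Gamma_pos_of_pos (by linarith)) (Real.Gamma_pos_of_pos hx)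

lemma gamma_sq_midpoint_le {a b : ℝ} (ha : 0 < a) (hb : 0 < b) :
    Real.Gamma ((a + b)/2) ^ 2 ≤ Real.Gamma a * Real.Gamma b := by
  have h := Real.convexOn_log_Gamma.2 (Set.mem_Ioi.2 ha) (Set.mem_Ioi.2 hb)
    (by norm_num : (0:ℝ) ≤ 1/2) (by norm_num : (0:ℝ) ≤ 1/2) (by norm_num)
  simp only [Function.comp, smul_eq_mul] at h
  have hmid : (1/2 : ℝ) * a + (1/2 : ℝ) * b = (a+b)/2 := by ring
  rw [hmid] at h
  have hga := Real.Gamma_pos_of_pos ha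
  have hgb := Real.Gamma_pos_of_pos hb
  have hgm := Real.Gamma_pos_of_pos (by linarith : (0:ℝ) < (a+b)/2)
  have h2 : 2 * Real.log (Real.Gamma ((a+b)/2)) ≤ Real.log (Real.Gamma a * Real.Gamma b) := by
    rw [Real.log_mul hga.ne' hgb.ne']; linarith
  have := Real.exp_le_exp.2 h2
  rw [Real.exp_log (mul_pos hga hgb)] at this
  calc Real.Gamma ((a+b)/2) ^ 2 = Real.exp (Real.log (Real.Gamma ((a+b)/2))) ^ 2 := by
        rw [Real.exp_log hgm]
    _ = Real.exp (2 * Real.log (Real.Gamma ((a+b)/2))) := by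
        rw [← Real.exp_nat_mul]; norm_num
    _ ≤ Real.Gamma a * Real.Gamma b := this

lemma rr_sq_le {x : ℝ} (hx : 0 < x) : rr x ^ 2 ≤ x := by
  have h := gamma_sq_midpoint_le hx (by linarith : (0:ℝ) < x + 1)
  have hmid : (x + (x+1))/2 = x + 1/2 := by ring
  rw [hmid, Real.Gamma_add_one hx.ne'] at h
  have hg := Real.Gamma_pos_of_pos hx
  rw [rr, div_pow, div_le_iff₀ (by positivity)]
  calc Real.Gamma (x + 1/2) ^ 2 ≤ Real.Gamma x * (x * Real.Gamma x) := h
    _ = x * Real.Gamma x ^ 2 := by ring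

lemma le_rr_sq {x : ℝ} (hx : 1/2 < x) : x - 1/2 ≤ rr x ^ 2 := by
  have h0 : (0:ℝ) < x - 1/2 := by linarith
  have h := gamma_sq_midpoint_le h0 (by linarith : (0:ℝ) < x + 1/2)
  have hmid : ((x - 1/2) + (x + 1/2))/2 = x := by ring
  rw [hmid] at h
  have hGx12 : Real.Gamma (x + 1/2) = (x - 1/2) * Real.Gamma (x - 1/2) := by
    have := Real.Gamma_add_one h0.ne'
    rw [show x - 1/2 + 1 = x + 1/2 by ring] at this
    exact this
  have hg12 := Real.Gamma_pos_of_pos h0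
  have hg := Real.Gamma_pos_of_pos (by linarith : (0:ℝ) < x)
  rw [rr, div_pow, le_div_iff₀ (by positivity)]
  calc (x - 1/2) * Real.Gamma x ^ 2 ≤ (x-1/2) * (Real.Gamma (x-1/2) * Real.Gamma (x+1/2)) := by
        nlinarith
    _ = Real.Gamma (x + 1/2) ^ 2 := by rw [hGx12]; ring

lemma rr_succ {x : ℝ} (hx : 0 < x) : rr (x + 1) = (x + 1/2)/x * rr x := by
  have h1 : Real.Gamma (x + 1 + 1/2) = (x + 1/2) * Real.Gamma (x + 1/2) := by
    rw [show x + 1 + 1/2 = (x + 1/2) + 1 by ring,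
      Real.Gamma_add_one (by positivity : (x + 1/2) ≠ 0)]
  have h2 : Real.Gamma (x + 1) = x * Real.Gamma x := Real.Gamma_add_one hx.ne'
  rw [rr, rr, h1, h2]
  have hg := (Real.Gamma_pos_of_pos hx).ne'
  field_simp

noncomputable def hh (x : ℝ) : ℝ := rr x ^ 2 - x + 1/4

lemma hh_rec {x : ℝ} (hx : 0 < x) :
    hh (x + 1) = (x + 1/2)^2 / x^2 * hh x - 1/(16 * x^2) := by
  have h := rr_succ hx
  rw [hh, hh, h]
  field_simp
  ring

lemma hh_lb {x : ℝ} (hx : 1/2 < x) : -(1/4) ≤ hh x := by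
  have := le_rr_sq hx; rw [hh]; linarith

lemma hh_ub {x : ℝ} (hx : 1/2 < x) : hh x ≤ 1/4 := by
  have := rr_sq_le (by linarith : (0:ℝ) < x); rw [hh]; linarith

lemma hh_iter_le {x : ℝ} (hx : 0 < x) (n : ℕ) :
    hh (x + n) ≤ (rr (x + n)^2 / rr x ^2) * hh x := by
  induction n with
  | zero =>
    simp [div_self (pow_ne_zero 2 (rr_pos hx).ne')]
  | succ n ih =>
    have hxn : (0:ℝ) < x + n := by have := n.cast_nonneg (α := ℝ); linarith
    have h1 : hh (x + (n+1 : ℕ)) = (x + n + 1/2)^2/(x+n)^2 * hh (x+n) - 1/(16*(x+n)^2) := by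
      push_cast
      rw [show x + ((n:ℝ)+1) = (x + n) + 1 by ring]
      exact hh_rec hxn
    have hc : (0:ℝ) < (x + n + 1/2)^2/(x+n)^2 := by positivity
    have h2 : (x + n + 1/2)^2/(x+n)^2 * hh (x+n) ≤
        (x + n + 1/2)^2/(x+n)^2 * ((rr (x + n)^2 / rr x ^2) * hh x) :=
      mul_le_mul_of_nonneg_left ih hc.le
    have h3 : rr (x + (n+1:ℕ))^2 = (x + n + 1/2)^2/(x+n)^2 * rr (x+n)^2 := by
      push_cast
      rw [show x + ((n:ℝ)+1) = (x + n) + 1 by ring, rr_succ hxn]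
      field_simp
    have h4 : (0:ℝ) < 1/(16*(x+n)^2) := by positivity
    calc hh (x + (n+1:ℕ)) ≤ (x + n + 1/2)^2/(x+n)^2 * hh (x+n) := by rw [h1]; linarith
      _ ≤ (x + n + 1/2)^2/(x+n)^2 * ((rr (x + n)^2 / rr x ^2) * hh x) := h2
      _ = (rr (x + (n+1:ℕ))^2 / rr x ^2) * hh x := by rw [h3]; ring

lemma hh_nonneg {x : ℝ} (hx : 1/2 < x) : 0 ≤ hh x := by
  by_contra hneg
  push_neg at hneg
  have hx0 : (0:ℝ) < x := by linarith
  have hr2 : (0:ℝ) < rr x ^ 2 := pow_pos (rr_pos hx0) 2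
  obtain ⟨n, hn⟩ := exists_nat_gt (rr x ^2 / (4 * (-hh x)) + 1/2 - x)
  have hxn : 1/2 < x + n := by
    have : (0:ℝ) ≤ n := n.cast_nonneg; linarith
  have h1 := hh_iter_le hx0 n
  have h2 : x + (n:ℝ) - 1/2 ≤ rr (x + n)^2 := le_rr_sq hxn
  have h3 : (rr (x + n)^2 / rr x ^2) * hh x ≤ ((x + n - 1/2) / rr x ^2) * hh x := by
    apply mul_le_mul_of_nonpos_right _ hneg.le
    gcongr
  have h4 : ((x + n - 1/2) / rr x ^2) * hh x < -(1/4) := by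
    rw [div_mul_eq_mul_div, div_lt_iff₀ hr2]
    have hd : (0:ℝ) < 4 * (-hh x) := by linarith
    have h6 : rr x ^2 / (4*(-hh x)) < x + (n:ℝ) - 1/2 := by linarith
    have h7 := (div_lt_iff₀ hd).mp h6
    nlinarith
  have h5 := hh_lb hxn
  linarith

lemma keynum {y : ℝ} (hy : 1 < y) :
    1/(16*y) + 1/(16*y^2) ≤ (y+1/2)^2/y^2 * (1/(16*(y-1))) := by
  have h0 : y ≠ 0 := by linarith
  have h1 : y - 1 ≠ 0 := by intro h; rw [sub_eq_zero] at h; simp [h] at hy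
  have hdif : (y+1/2)^2/y^2 * (1/(16*(y-1))) - (1/(16*y) + 1/(16*y^2))
      = (y+5/4)/(16*y^2*(y-1)) := by
    field_simp
    ring
  have hpos : (0:ℝ) ≤ (y+5/4)/(16*y^2*(y-1)) :=
    div_nonneg (by linarith) (by nlinarith)
  linarith

lemma hh_iter_ge {x : ℝ} (hx : 1 < x) (n : ℕ) :
    1/(16*(x + n - 1)) + (rr (x + n)^2 / rr x ^2) * (hh x - 1/(16*(x-1))) ≤ hh (x + n) := by
  have hx0 : (0:ℝ) < x := by linarith
  induction n with
  | zero =>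
    simp [div_self (pow_ne_zero 2 (rr_pos hx0).ne'), hh]
  | succ n ih =>
    have hcn : (0:ℝ) ≤ n := n.cast_nonneg
    have hy1 : (1:ℝ) < x + n := by linarith
    have hyn : (0:ℝ) < x + n := by linarith
    have h1 : hh (x + (n+1 : ℕ)) = (x + n + 1/2)^2/(x+n)^2 * hh (x+n) - 1/(16*(x+n)^2) := by
      push_cast
      rw [show x + ((n:ℝ)+1) = (x + n) + 1 by ring]
      exact hh_rec hyn
    have h3 : rr (x + (n+1:ℕ))^2 = (x + n + 1/2)^2/(x+n)^2 * rr (x+n)^2 := by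
      push_cast
      rw [show x + ((n:ℝ)+1) = (x + n) + 1 by ring, rr_succ hyn]
      field_simp
    have hc : (0:ℝ) < (x + n + 1/2)^2/(x+n)^2 := by positivity
    have hnum : 1/(16*(x + (n:ℝ) + 1 - 1)) + 1/(16*(x+n)^2) ≤
        (x + n + 1/2)^2/(x+n)^2 * (1/(16*(x + n - 1))) := by
      have e : x + (n:ℝ) + 1 - 1 = x + n := by ring
      rw [e]
      exact keynum hy1
    have h2 : (x + n + 1/2)^2/(x+n)^2 * (1/(16*(x + n - 1))) +
        (x + n + 1/2)^2/(x+n)^2 * ((rr (x + n)^2 / rr x ^2) * (hh x - 1/(16*(x-1)))) ≤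
        (x + n + 1/2)^2/(x+n)^2 * hh (x+n) := by
      rw [← mul_add]
      exact mul_le_mul_of_nonneg_left ih hc.le
    have h4 : (x + n + 1/2)^2/(x+n)^2 * ((rr (x + n)^2 / rr x ^2) * (hh x - 1/(16*(x-1))))
        = (rr (x + ((n:ℝ)+1))^2 / rr x ^2) * (hh x - 1/(16*(x-1))) := by
      push_cast at h3
      rw [h3]; ring
    rw [h4] at h2
    push_cast at h1 ⊢
    rw [h1]
    have e2 : x + ((n:ℝ)+1) - 1 = x + (n:ℝ) + 1 - 1 := by ring
    rw [e2]
    linarith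

lemma hh_le {x : ℝ} (hx : 1 < x) : hh x ≤ 1/(16*(x-1)) := by
  by_contra hgt
  push_neg at hgt
  have hx0 : (0:ℝ) < x := by linarith
  have hr2 : (0:ℝ) < rr x ^ 2 := pow_pos (rr_pos hx0) 2
  set δ : ℝ := hh x - 1/(16*(x-1)) with hδ
  have hδ0 : 0 < δ := sub_pos.2 hgt
  obtain ⟨n, hn⟩ := exists_nat_gt (rr x ^2 / (4 * δ) + 1/2 - x)
  have hcn : (0:ℝ) ≤ n := n.cast_nonneg
  have hxn : 1/2 < x + n := by linarith
  have h1 := hh_iter_ge hx n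
  have h2 : x + (n:ℝ) - 1/2 ≤ rr (x + n)^2 := le_rr_sq hxn
  have h3 : ((x + n - 1/2) / rr x ^2) * δ ≤ (rr (x + n)^2 / rr x ^2) * δ := by
    gcongr
  have h4 : 1/4 < ((x + n - 1/2) / rr x ^2) * δ := by
    rw [div_mul_eq_mul_div, lt_div_iff₀ hr2]
    have hd : (0:ℝ) < 4 * δ := by linarith
    have h6 : rr x ^2 / (4*δ) < x + (n:ℝ) - 1/2 := by linarith
    have h7 := (div_lt_iff₀ hd).mp h6
    nlinarith
  have h5 := hh_ub hxn
  have h8 : (0:ℝ) ≤ 1/(16*(x + n - 1)) := by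
    apply div_nonneg (by norm_num)
    nlinarith
  linarith

lemma tendsto_hh_zero : Tendsto hh atTop (nhds 0) := by
  have h16 : Tendsto (fun x : ℝ => 16*(x-1)) atTop atTop :=
    (tendsto_atTop_add_const_right atTop (-1) tendsto_id).const_mul_atTop (by norm_num)
  have hinv : Tendsto (fun x : ℝ => 1/(16*(x-1))) atTop (nhds 0) := by
    simpa only [one_div, Pi.inv_def] using h16.inv_tendsto_atTop
  apply tendsto_of_tendsto_of_tendsto_of_le_of_le' tendsto_const_nhds hinv
  · filter_upwards [eventually_gt_atTop (1:ℝ)] with x hx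
    exact hh_nonneg (by linarith)
  · filter_upwards [eventually_gt_atTop (1:ℝ)] with x hx
    exact hh_le hx

lemma tendsto_hh1 : Tendsto (fun d : ℕ => hh ((d:ℝ) - 1/2)) atTop (nhds 0) := by
  apply tendsto_hh_zero.comp
  apply tendsto_atTop_mono (fun d : ℕ => by linarith [(le_refl ((d:ℝ) - 1/2))] :
    ∀ d : ℕ, (d:ℝ) - 1 ≤ (d:ℝ) - 1/2)
  exact tendsto_atTop_add_const_right atTop (-1) tendsto_natCast_atTop_atTop

lemma tendsto_half_nat : Tendsto (fun d : ℕ => (d:ℝ)/2) atTop atTop :=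
  tendsto_natCast_atTop_atTop.atTop_div_const (by norm_num)

lemma tendsto_hh2 : Tendsto (fun d : ℕ => hh ((d:ℝ)/2)) atTop (nhds 0) :=
  tendsto_hh_zero.comp tendsto_half_nat

lemma tendsto_s2d : Tendsto (fun d : ℕ => rr ((d:ℝ) - 1/2)^2 / d) atTop (nhds 1) := by
  have h : Tendsto (fun d : ℕ => hh ((d:ℝ)-1/2) * (1/d) + 1 - (3/4) * (1/d)) atTop (nhds 1) := by
    have := ((tendsto_hh1.mul tendsto_one_div_atTop_nhds_zero_nat).add_const 1).sub
      (tendsto_one_div_atTop_nhds_zero_nat.const_mul (3/4))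
    simpa using this
  apply h.congr'
  filter_upwards [eventually_ge_atTop 1] with d hd
  have hd0 : (d:ℝ) ≠ 0 := by positivity
  have : rr ((d:ℝ)-1/2)^2 = hh ((d:ℝ)-1/2) + (d:ℝ) - 3/4 := by rw [hh]; ring
  rw [this]; field_simp

lemma tendsto_t2d : Tendsto (fun d : ℕ => rr ((d:ℝ)/2)^2 / d) atTop (nhds (1/2)) := by
  have h : Tendsto (fun d : ℕ => hh ((d:ℝ)/2) * (1/d) + 1/2 - (1/4) * (1/d)) atTop (nhds (1/2)) := by
    have := ((tendsto_hh2.mul tendsto_one_div_atTop_nhds_zero_nat).add_const (1/2)).sub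
      (tendsto_one_div_atTop_nhds_zero_nat.const_mul (1/4))
    simpa using this
  apply h.congr'
  filter_upwards [eventually_ge_atTop 1] with d hd
  have hd0 : (d:ℝ) ≠ 0 := by positivity
  have : rr ((d:ℝ)/2)^2 = hh ((d:ℝ)/2) + (d:ℝ)/2 - 1/4 := by rw [hh]; ring
  rw [this]; field_simp

lemma tendsto_dt2 : Tendsto (fun d : ℕ => (d:ℝ) / rr ((d:ℝ)/2)^2) atTop (nhds 2) := by
  have h := tendsto_t2d.inv₀ (by norm_num : (1/2 : ℝ) ≠ 0)
  norm_num at h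
  exact h

lemma tendsto_ratio : Tendsto (fun d : ℕ => rr ((d:ℝ)-1/2) / rr ((d:ℝ)/2)) atTop
    (nhds (Real.sqrt 2)) := by
  have h : Tendsto (fun d : ℕ => Real.sqrt ((rr ((d:ℝ)-1/2)^2 / d) * ((d:ℝ) / rr ((d:ℝ)/2)^2)))
      atTop (nhds (Real.sqrt 2)) := by
    have := (tendsto_s2d.mul tendsto_dt2).sqrt
    norm_num at this
    exact this
  apply h.congr'
  filter_upwards [eventually_ge_atTop 1] with d hd
  have hd1 : (1:ℝ) ≤ d := by exact_mod_cast hd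
  have hs : 0 < rr ((d:ℝ)-1/2) := rr_pos (by linarith)
  have ht : 0 < rr ((d:ℝ)/2) := rr_pos (by linarith)
  have hd0 : (d:ℝ) ≠ 0 := by positivity
  have e : (rr ((d:ℝ)-1/2)^2 / d) * ((d:ℝ) / rr ((d:ℝ)/2)^2)
      = (rr ((d:ℝ)-1/2) / rr ((d:ℝ)/2))^2 := by
    field_simp
  rw [e, Real.sqrt_sq (by positivity)]

lemma main_rr : Tendsto (fun d : ℕ => (d:ℝ) * (Real.sqrt 2 - rr ((d:ℝ)-1/2) / rr ((d:ℝ)/2)))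
    atTop (nhds (Real.sqrt 2 / 8)) := by
  have hs2 : (0:ℝ) < Real.sqrt 2 := Real.sqrt_pos.2 (by norm_num)
  have hmul : Real.sqrt 2 * Real.sqrt 2 = 2 := Real.mul_self_sqrt (by norm_num)
  have hG : Tendsto (fun d : ℕ => ((d:ℝ) / rr ((d:ℝ)/2)^2) *
      ((2 * hh ((d:ℝ)/2) - hh ((d:ℝ)-1/2) + 1/4) / (Real.sqrt 2 + rr ((d:ℝ)-1/2) / rr ((d:ℝ)/2))))
      atTop (nhds (Real.sqrt 2 / 8)) := by
    have hnum : Tendsto (fun d : ℕ => 2 * hh ((d:ℝ)/2) - hh ((d:ℝ)-1/2) + 1/4) atTop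
        (nhds (1/4)) := by
      have := ((tendsto_hh2.const_mul 2).sub tendsto_hh1).add_const (1/4 : ℝ)
      simpa using this
    have hden : Tendsto (fun d : ℕ => Real.sqrt 2 + rr ((d:ℝ)-1/2) / rr ((d:ℝ)/2)) atTop
        (nhds (Real.sqrt 2 + Real.sqrt 2)) := tendsto_const_nhds.add tendsto_ratio
    have := tendsto_dt2.mul (hnum.div hden (by linarith))
    have e : Real.sqrt 2 / 8 = 2 * (1/4 / (Real.sqrt 2 + Real.sqrt 2)) := by
      field_simp
      nlinarith [hmul, hs2]
    rw [e]; exact this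
  apply hG.congr'
  filter_upwards [eventually_ge_atTop 1] with d hd
  have hd1 : (1:ℝ) ≤ d := by exact_mod_cast hd
  have hs : 0 < rr ((d:ℝ)-1/2) := rr_pos (by linarith)
  have ht : 0 < rr ((d:ℝ)/2) := rr_pos (by linarith)
  set s := rr ((d:ℝ)-1/2)
  set t := rr ((d:ℝ)/2)
  have hd0 : (d:ℝ) ≠ 0 := by positivity
  have hden : Real.sqrt 2 + s/t ≠ 0 := by positivity
  have e1 : 2 * hh ((d:ℝ)/2) - hh ((d:ℝ)-1/2) + 1/4 = 2*t^2 - s^2 := by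
    simp only [hh]; ring
  rw [e1]
  have e2 : (Real.sqrt 2 - s/t) * (Real.sqrt 2 + s/t) = (2*t^2 - s^2)/t^2 := by
    field_simp
    linear_combination (t^2) * hmul
  have e3 : Real.sqrt 2 - s/t = ((2*t^2 - s^2)/t^2) / (Real.sqrt 2 + s/t) := by
    rw [eq_div_iff hden]; exact e2
  rw [e3]
  field_simp


/-- Refined asymptotic `ξ_μ(d) = √2 (1 − 1/(8d) + o(1/d))` for the mean
distance `ξ_μ(d) = 2^{d−1} (Γ(d/2))² / (√π · Γ(d − 1/2))` between two independent uniform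
random points on the unit sphere `S^{d−1} ⊂ ℝ^d`:
`lim_{d→∞} d · (√2 − ξ_μ(d)) = √2 / 8`, the limit taken over integers `d → ∞`. -/
theorem mean_distance_refined_asymptotic :
    Tendsto
      (fun d : ℕ =>
        (d : ℝ) *
          (Real.sqrt 2 -
            (2 : ℝ) ^ ((d : ℝ) - 1) * Real.Gamma ((d : ℝ) / 2) ^ 2
              / (Real.sqrt π * Real.Gamma ((d : ℝ) - 1 / 2))))
      atTop (nhds (Real.sqrt 2 / 8)) := by

  apply main_rr.congr'
  filter_upwards [eventually_ge_atTop 1] with d hd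
  have hd1 : (1:ℝ) ≤ d := by exact_mod_cast hd
  have hG1 : 0 < Real.Gamma ((d:ℝ)/2) := Real.Gamma_pos_of_pos (by linarith)
  have hG2 : 0 < Real.Gamma ((d:ℝ)/2 + 1/2) := Real.Gamma_pos_of_pos (by linarith)
  have hG3 : 0 < Real.Gamma ((d:ℝ) - 1/2) := Real.Gamma_pos_of_pos (by linarith)
  have hG4 : 0 < Real.Gamma (d:ℝ) := Real.Gamma_pos_of_pos (by linarith)
  have hpi : (0:ℝ) < Real.sqrt π := Real.sqrt_pos.2 Real.pi_pos
  have hpow : (0:ℝ) < (2:ℝ) ^ ((d:ℝ) - 1) := Real.rpow_pos_of_pos (by norm_num) _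
  have dup := Real.Gamma_mul_Gamma_add_half ((d:ℝ)/2)
  rw [show (2:ℝ) * ((d:ℝ)/2) = (d:ℝ) by ring] at dup
  have h2pow : (2:ℝ)^((d:ℝ)-1) * (2:ℝ)^(1-(d:ℝ)) = 1 := by
    rw [← Real.rpow_add (by norm_num : (0:ℝ) < 2)]; norm_num
  have key : (2:ℝ)^((d:ℝ)-1) * (Real.Gamma ((d:ℝ)/2) * Real.Gamma ((d:ℝ)/2 + 1/2))
      = Real.Gamma (d:ℝ) * Real.sqrt π := by
    rw [dup, show (2:ℝ)^((d:ℝ)-1) * (Real.Gamma (d:ℝ) * (2:ℝ)^(1-(d:ℝ)) * Real.sqrt π)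
      = ((2:ℝ)^((d:ℝ)-1) * (2:ℝ)^(1-(d:ℝ))) * (Real.Gamma (d:ℝ) * Real.sqrt π) by ring,
      h2pow, one_mul]
  have hrr : rr ((d:ℝ)-1/2) / rr ((d:ℝ)/2)
      = (2 : ℝ) ^ ((d : ℝ) - 1) * Real.Gamma ((d : ℝ) / 2) ^ 2
          / (Real.sqrt π * Real.Gamma ((d : ℝ) - 1 / 2)) := by
    rw [rr, rr, show (d:ℝ) - 1/2 + 1/2 = (d:ℝ) by ring]
    set a := Real.Gamma (d:ℝ) with ha
    set b := Real.Gamma ((d:ℝ) - 1/2) with hb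
    set c := Real.Gamma ((d:ℝ)/2) with hc
    set e := Real.Gamma ((d:ℝ)/2 + 1/2) with he
    set p := Real.sqrt π with hp
    set w := (2:ℝ)^((d:ℝ)-1) with hw
    field_simp
    linear_combination (-1 : ℝ) * key
  rw [hrr]
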